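/- arXiv:2207.13887 — 6 statements merged into one kernel-verified Lean document; each statement's English description precedes it below -/
import Mathlib

section
/- Let F : ℝ^d → ℝ be differentiable and β-smooth, let w ∈ ℝ^d, let g = ∇F(w), let k ∈ [0,1], and let H be a symmetric real d×d matrix with αI ≼ H ≼ βI for reals 0 < α ≤ β. If w' = w − (α^k/β) H^{−k} g, then F(w') − F(w) ≤ −(α^k/(2β^{k+1})) ‖g‖². -/
open scoped RealInnerProductSpace

/-- The spectral power `H^s` of a symmetric real matrix `H`, obtained by raising
each eigenvalue in its spectral decomposition to the real power `s`. -/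
noncomputable def specPow {d : ℕ} (H : Matrix (Fin d) (Fin d) ℝ) (hH : H.IsHermitian)
    (s : ℝ) : Matrix (Fin d) (Fin d) ℝ :=
  (hH.eigenvectorUnitary : Matrix (Fin d) (Fin d) ℝ) *
    Matrix.diagonal (fun i => hH.eigenvalues i ^ s) *
    star (hH.eigenvectorUnitary : Matrix (Fin d) (Fin d) ℝ)

lemma specPow_apply_eigenvectorBasis {d : ℕ} (H : Matrix (Fin d) (Fin d) ℝ)
    (hH : H.IsHermitian) (s : ℝ) (j : Fin d) :
    Matrix.toEuclideanLin (specPow H hH s) (hH.eigenvectorBasis j)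
      = (hH.eigenvalues j ^ s) • hH.eigenvectorBasis j := by
  rw [Matrix.toEuclideanLin_apply, specPow, ← Matrix.mulVec_mulVec, ← Matrix.mulVec_mulVec,
    Matrix.IsHermitian.star_eigenvectorUnitary_mulVec, Matrix.diagonal_mulVec_single]
  have h1 : (Pi.single j (hH.eigenvalues j ^ s * 1) : Fin d → ℝ)
      = (hH.eigenvalues j ^ s) • (Pi.single j 1 : Fin d → ℝ) := by
    rw [mul_one, ← Pi.single_smul, smul_eq_mul, mul_one]
  rw [h1, Matrix.mulVec_smul, Matrix.IsHermitian.eigenvectorUnitary_mulVec]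
  simp

lemma toEuclideanLin_apply_eigenvectorBasis {d : ℕ} (H : Matrix (Fin d) (Fin d) ℝ)
    (hH : H.IsHermitian) (j : Fin d) :
    Matrix.toEuclideanLin H (hH.eigenvectorBasis j)
      = (hH.eigenvalues j) • hH.eigenvectorBasis j := by
  rw [Matrix.toEuclideanLin_apply, Matrix.IsHermitian.mulVec_eigenvectorBasis]
  simp

lemma pilp_sum_apply {d m : ℕ} (s : Finset (Fin m)) (f : Fin m → EuclideanSpace ℝ (Fin d))
    (j : Fin d) : (∑ i ∈ s, f i) j = ∑ i ∈ s, f i j := by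
  induction s using Finset.induction with
  | empty => simp
  | insert _ _ h ih => rw [Finset.sum_insert h, Finset.sum_insert h, ← ih, PiLp.add_apply]

section Helpers

variable {E : Type*} [NormedAddCommGroup E] [InnerProductSpace ℝ E]

lemma my_repr_diag {d : ℕ} (B : OrthonormalBasis (Fin d) ℝ E) (T : E →ₗ[ℝ] E)
    (t : Fin d → ℝ) (hT : ∀ j, T (B j) = t j • B j) (x : E) (j : Fin d) :
    B.repr (T x) j = t j * B.repr x j := by
  conv_lhs => rw [← B.sum_repr' x]
  rw [map_sum, map_sum, pilp_sum_apply]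
  simp only [map_smul, hT, smul_smul, OrthonormalBasis.repr_self, PiLp.smul_apply,
    EuclideanSpace.single_apply, smul_eq_mul]
  rw [Finset.sum_eq_single j]
  · simp [B.repr_apply_apply]; ring
  · intro i _ hij; simp [Ne.symm hij]
  · intro h; exact absurd (Finset.mem_univ j) h

lemma my_inner_eq_sum {d : ℕ} (B : OrthonormalBasis (Fin d) ℝ E) (x y : E) :
    ⟪x, y⟫ = ∑ j, B.repr x j * B.repr y j := by
  rw [← B.repr.inner_map_map x y]
  simp only [PiLp.inner_apply, RCLike.inner_apply, starRingEnd_apply, star_trivial]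
  exact Finset.sum_congr rfl fun j _ => mul_comm _ _

lemma my_norm_sq_eq_sum {d : ℕ} (B : OrthonormalBasis (Fin d) ℝ E) (x : E) :
    ‖x‖ ^ 2 = ∑ j, (B.repr x j) ^ 2 := by
  rw [← real_inner_self_eq_norm_sq, my_inner_eq_sum B]
  simp [sq]

lemma my_descent [CompleteSpace E] (F : E → ℝ) (hdiff : Differentiable ℝ F) (β : ℝ)
    (hsmooth : ∀ u v : E, ‖gradient F u - gradient F v‖ ≤ β * ‖u - v‖)
    (w u : E) :
    F (w + u) ≤ F w + ⟪gradient F w, u⟫ + β / 2 * ‖u‖ ^ 2 := by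
  set g := gradient F w with hg
  set φ : ℝ → ℝ := fun t => F (w + t • u) - t * ⟪g, u⟫ - t ^ 2 * (β * ‖u‖ ^ 2 / 2) with hφ
  have hderiv : ∀ t : ℝ, HasDerivAt φ
      (⟪gradient F (w + t • u), u⟫ - ⟪g, u⟫ - 2 * t ^ 1 * (β * ‖u‖ ^ 2 / 2)) t := by
    intro t
    have hline : HasDerivAt (fun t : ℝ => w + t • u) u t := by
      simpa using ((hasDerivAt_id t).smul_const u).const_add w
    have hF : HasFDerivAt F ((InnerProductSpace.toDual ℝ E) (gradient F (w + t • u)))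
        (w + t • u) := (hdiff _).hasGradientAt
    have h1 : HasDerivAt (fun t : ℝ => F (w + t • u))
        (⟪gradient F (w + t • u), u⟫) t := by
      have := hF.comp_hasDerivAt t hline
      rw [InnerProductSpace.toDual_apply_apply] at this
      exact this
    have h2 : HasDerivAt (fun t : ℝ => t * ⟪g, u⟫) (⟪g, u⟫) t := by
      simpa using (hasDerivAt_id t).mul_const (⟪g, u⟫ : ℝ)
    have h3 : HasDerivAt (fun t : ℝ => t ^ 2 * (β * ‖u‖ ^ 2 / 2))
        ((2 * t ^ 1) * (β * ‖u‖ ^ 2 / 2)) t := by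
      simpa using (hasDerivAt_pow 2 t).mul_const (β * ‖u‖ ^ 2 / 2)
    exact (h1.sub h2).sub h3
  have hanti : AntitoneOn φ (Set.Icc 0 1) := by
    apply antitoneOn_of_deriv_nonpos (convex_Icc 0 1)
    · exact (continuous_iff_continuousAt.2 fun t => (hderiv t).continuousAt).continuousOn
    · exact fun t _ => (hderiv t).differentiableAt.differentiableWithinAt
    · intro t ht
      rw [interior_Icc] at ht
      rw [(hderiv t).deriv]
      have hb : ⟪gradient F (w + t • u) - g, u⟫ ≤ β * t * ‖u‖ ^ 2 := by
        calc ⟪gradient F (w + t • u) - g, u⟫ ≤ ‖gradient F (w + t • u) - g‖ * ‖u‖ :=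
              real_inner_le_norm _ _
          _ ≤ (β * ‖(w + t • u) - w‖) * ‖u‖ := by
              apply mul_le_mul_of_nonneg_right _ (norm_nonneg _)
              exact hsmooth _ _
          _ = β * t * ‖u‖ ^ 2 := by
              rw [add_sub_cancel_left, norm_smul, Real.norm_eq_abs, abs_of_pos ht.1]
              ring
      rw [inner_sub_left] at hb
      nlinarith [sq_nonneg ‖u‖, ht.1.le]
  have h01 := hanti (Set.left_mem_Icc.2 zero_le_one) (Set.right_mem_Icc.2 zero_le_one)
    zero_le_one
  simp only [φ, one_smul, zero_smul, add_zero, zero_mul, sub_zero, one_mul,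
    one_pow] at h01
  have h0 : (0:ℝ) ^ 2 * (β * ‖u‖ ^ 2 / 2) = 0 := by ring
  rw [h0, sub_zero] at h01
  linarith

end Helpers

lemma my_scalar (α β k lam : ℝ) (hα : 0 < α) (hαβ : α ≤ β) (hk0 : 0 ≤ k)
    (h1 : α ≤ lam) (h2 : lam ≤ β) :
    -(α ^ k / β) * lam ^ (-k) + β / 2 * ((α ^ k / β) ^ 2 * (lam ^ (-k)) ^ 2)
      ≤ -(α ^ k / (2 * β ^ (k + 1))) := by
  have hβ : 0 < β := lt_of_lt_of_le hα hαβ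
  have hlam : 0 < lam := lt_of_lt_of_le hα h1
  have hak : 0 < α ^ k := Real.rpow_pos_of_pos hα k
  have hβk : 0 < β ^ k := Real.rpow_pos_of_pos hβ k
  have ht : 0 < lam ^ (-k) := Real.rpow_pos_of_pos hlam _
  have htub : lam ^ (-k) ≤ α ^ (-k) :=
    Real.rpow_le_rpow_of_nonpos hα h1 (neg_nonpos.2 hk0)
  have htlb : β ^ (-k) ≤ lam ^ (-k) :=
    Real.rpow_le_rpow_of_nonpos hlam h2 (neg_nonpos.2 hk0)
  have hαinv : α ^ k * α ^ (-k) = 1 := by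
    rw [← Real.rpow_add hα]; norm_num
  have hβneg : β ^ (-k) = (β ^ k)⁻¹ := by
    rw [Real.rpow_neg hβ.le]
  have hk1 : β ^ (k + 1) = β ^ k * β := by
    rw [Real.rpow_add hβ, Real.rpow_one]
  set t := lam ^ (-k) with hts
  have h1' : α ^ k * t ≤ 1 := by
    calc α ^ k * t ≤ α ^ k * α ^ (-k) := by nlinarith
      _ = 1 := hαinv
  have step1 : -(α ^ k / β) * t + β / 2 * ((α ^ k / β) ^ 2 * t ^ 2)
      ≤ -(α ^ k / β) * t / 2 := by
    have he : β / 2 * ((α ^ k / β) ^ 2 * t ^ 2) = (α ^ k / β) * t * (α ^ k * t) / 2 := by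
      field_simp
    rw [he]
    have hηt : 0 < (α ^ k / β) * t := mul_pos (div_pos hak hβ) ht
    nlinarith
  have step2 : -(α ^ k / β) * t / 2 ≤ -(α ^ k / β) * β ^ (-k) / 2 := by
    have hη : 0 < α ^ k / β := div_pos hak hβ
    nlinarith
  have step3 : -(α ^ k / β) * β ^ (-k) / 2 = -(α ^ k / (2 * β ^ (k + 1))) := by
    rw [hβneg, hk1]
    field_simp
  linarith

/-- Let `F : ℝ^d → ℝ` be differentiable and `β`-smooth, `w ∈ ℝ^d`, `g = ∇F(w)`,
`k ∈ [0,1]`, and `H` a symmetric matrix with `αI ≼ H ≼ βI`, `0 < α ≤ β`. If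
`w' = w − (α^k/β) H^{−k} g`, then `F(w') − F(w) ≤ −(α^k/(2β^{k+1})) ‖g‖²`. -/
theorem descent_of_preconditioned_step {d : ℕ} (F : EuclideanSpace ℝ (Fin d) → ℝ)
    (hdiff : Differentiable ℝ F) (α β k : ℝ) (hα : 0 < α) (hαβ : α ≤ β)
    (hk0 : 0 ≤ k) (hk1 : k ≤ 1)
    (hsmooth : ∀ u v : EuclideanSpace ℝ (Fin d),
      ‖gradient F u - gradient F v‖ ≤ β * ‖u - v‖)
    (H : Matrix (Fin d) (Fin d) ℝ) (hH : H.IsHermitian)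
    (hbound : ∀ x : EuclideanSpace ℝ (Fin d),
      α * ‖x‖ ^ 2 ≤ ⟪x, Matrix.toEuclideanLin H x⟫ ∧
      ⟪x, Matrix.toEuclideanLin H x⟫ ≤ β * ‖x‖ ^ 2)
    (w w' g : EuclideanSpace ℝ (Fin d)) (hg : g = gradient F w)
    (hw' : w' = w - (α ^ k / β) • Matrix.toEuclideanLin (specPow H hH (-k)) g) :
    F w' - F w ≤ -(α ^ k / (2 * β ^ (k + 1))) * ‖g‖ ^ 2 := by
  have hβ : 0 < β := lt_of_lt_of_le hα hαβ
  set B := hH.eigenvectorBasis with hB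
  set μ := hH.eigenvalues with hμ
  -- eigenvalue bounds
  have hnormB : ∀ j, ‖B j‖ = 1 := fun j => B.orthonormal.1 j
  have hμlb : ∀ j, α ≤ μ j := by
    intro j
    have h := (hbound (B j)).1
    rw [toEuclideanLin_apply_eigenvectorBasis, real_inner_smul_right,
      real_inner_self_eq_norm_sq, hnormB j] at h
    simpa using h
  have hμub : ∀ j, μ j ≤ β := by
    intro j
    have h := (hbound (B j)).2
    rw [toEuclideanLin_apply_eigenvectorBasis, real_inner_smul_right,
      real_inner_self_eq_norm_sq, hnormB j] at h
    simpa using h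
  set P := Matrix.toEuclideanLin (specPow H hH (-k)) with hPdef
  set Pg := P g with hPg
  set η := α ^ k / β with hη
  have hηpos : 0 < η := div_pos (Real.rpow_pos_of_pos hα k) hβ
  set r := fun j => B.repr g j with hr
  have hPB : ∀ j, P (B j) = (μ j ^ (-k)) • B j := fun j =>
    specPow_apply_eigenvectorBasis H hH (-k) j
  have hrepr : ∀ j, B.repr Pg j = μ j ^ (-k) * r j := fun j =>
    my_repr_diag B P (fun j => μ j ^ (-k)) hPB g j
  have hgPg : ⟪g, Pg⟫ = ∑ j, μ j ^ (-k) * (r j) ^ 2 := by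
    rw [my_inner_eq_sum B]
    refine Finset.sum_congr rfl fun j _ => ?_
    rw [hrepr j]; ring
  have hPgsq : ‖Pg‖ ^ 2 = ∑ j, (μ j ^ (-k)) ^ 2 * (r j) ^ 2 := by
    rw [my_norm_sq_eq_sum B]
    refine Finset.sum_congr rfl fun j _ => ?_
    rw [hrepr j]; ring
  have hgsq : ‖g‖ ^ 2 = ∑ j, (r j) ^ 2 := my_norm_sq_eq_sum B g
  -- descent lemma
  have hw'' : w' = w + -(η • Pg) := by rw [hw', sub_eq_add_neg]
  have hdesc := my_descent F hdiff β hsmooth w (-(η • Pg))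
  rw [← hw'', ← hg] at hdesc
  have hinn : ⟪g, -(η • Pg)⟫ = -(η * ⟪g, Pg⟫) := by
    rw [inner_neg_right, real_inner_smul_right]
  have hnu : ‖-(η • Pg)‖ ^ 2 = η ^ 2 * ‖Pg‖ ^ 2 := by
    rw [norm_neg, norm_smul, Real.norm_eq_abs, abs_of_pos hηpos, mul_pow]
  rw [hinn, hnu] at hdesc
  have key : -(η * ⟪g, Pg⟫) + β / 2 * (η ^ 2 * ‖Pg‖ ^ 2)
      ≤ -(α ^ k / (2 * β ^ (k + 1))) * ‖g‖ ^ 2 := by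
    rw [hgPg, hPgsq, hgsq, Finset.mul_sum, Finset.mul_sum, Finset.mul_sum, Finset.mul_sum,
      ← Finset.sum_neg_distrib, ← Finset.sum_add_distrib]
    refine Finset.sum_le_sum fun j _ => ?_
    have hsc := my_scalar α β k (μ j) hα hαβ hk0 (hμlb j) (hμub j)
    have hsq : (0:ℝ) ≤ (r j) ^ 2 := sq_nonneg _
    calc -(η * (μ j ^ (-k) * r j ^ 2)) + β / 2 * (η ^ 2 * ((μ j ^ (-k)) ^ 2 * r j ^ 2))
        = (-(η) * μ j ^ (-k) + β / 2 * (η ^ 2 * (μ j ^ (-k)) ^ 2)) * r j ^ 2 := by ring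
      _ ≤ -(α ^ k / (2 * β ^ (k + 1))) * r j ^ 2 := by
          have h2 : -(η) * μ j ^ (-k) + β / 2 * (η ^ 2 * (μ j ^ (-k)) ^ 2)
              ≤ -(α ^ k / (2 * β ^ (k + 1))) := by
            rw [hη]; exact hsc
          exact mul_le_mul_of_nonneg_right h2 hsq
  linarith
end

section
/- (Theorem 4.1, Newton's method on AdaCore coresets, per-iteration form.) Let 0 < α ≤ β and ε ≥ 0. Let L : ℝ^d → ℝ (the full loss) and F : ℝ^d → ℝ (the weighted coreset loss) be twice continuously differentiable, with F β-smooth, and suppose at a point w ∈ ℝ^d the Hessians H_L = ∇²L(w) and H_F = ∇²F(w) are symmetric and satisfy αI ≼ H_L ≼ βI and αI ≼ H_F ≼ βI. Suppose the coreset approximates the preconditioned full gradient with error at most ε, i.e. ‖H_L⁻¹∇L(w) − H_F⁻¹∇F(w)‖ ≤ ε, and suppose ‖∇L(w)‖ ≥ βε. Then the Newton step on the coreset loss with learning rate α/β, namely w' = w − (α/β) H_F⁻¹ ∇F(w), satisfies F(w') − F(w) ≤ −(α³/(2β⁴)) (‖∇L(w)‖ − βε)². -/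
open scoped RealInnerProductSpace

lemma aux_descent_lemma {d : ℕ} (F : EuclideanSpace ℝ (Fin d) → ℝ) (β : ℝ)
    (hF : ContDiff ℝ 2 F)
    (hsmooth : ∀ u v : EuclideanSpace ℝ (Fin d),
      ‖gradient F u - gradient F v‖ ≤ β * ‖u - v‖)
    (u v : EuclideanSpace ℝ (Fin d)) :
    F (u + v) ≤ F u + ⟪gradient F u, v⟫ + β / 2 * ‖v‖ ^ 2 := by
  have hdiff : Differentiable ℝ F := hF.differentiable (by norm_num)
  have hgrad : ∀ x : EuclideanSpace ℝ (Fin d), HasGradientAt F (gradient F x) x :=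
    fun x => (hdiff x).hasGradientAt
  set c : ℝ → EuclideanSpace ℝ (Fin d) := fun t => u + t • v with hc
  have hcd : ∀ t : ℝ, HasDerivAt c v t := by
    intro t
    simpa [hc] using ((hasDerivAt_id t).smul_const v).const_add u
  have hgrad_cont : Continuous (gradient F) := by
    rw [Metric.continuous_iff]
    intro x ε hε
    rcases le_or_gt β 0 with hβ | hβ
    · exact ⟨1, one_pos, fun y _ => by
        have := hsmooth y x
        have : ‖gradient F y - gradient F x‖ ≤ 0 :=
          this.trans (mul_nonpos_of_nonpos_of_nonneg hβ (norm_nonneg _))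
        rw [dist_eq_norm]
        linarith [norm_nonneg (gradient F y - gradient F x)]⟩
    · refine ⟨ε / β, by positivity, fun y hy => ?_⟩
      rw [dist_eq_norm]
      calc ‖gradient F y - gradient F x‖ ≤ β * ‖y - x‖ := hsmooth y x
        _ < β * (ε / β) := by
            apply mul_lt_mul_of_pos_left _ hβ
            rwa [← dist_eq_norm]
        _ = ε := by field_simp
  have hderiv : ∀ t ∈ Set.uIcc (0:ℝ) 1,
      HasDerivAt (fun t => F (c t)) (⟪gradient F (c t), v⟫) t := by
    intro t _
    have h1 : HasFDerivAt F (fderiv ℝ F (c t)) (c t) := (hdiff (c t)).hasFDerivAt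
    have h2 := h1.comp_hasDerivAt t (hcd t)
    have h3 : fderiv ℝ F (c t) v = ⟪gradient F (c t), v⟫ := by
      have := (hgrad (c t)).hasFDerivAt
      rw [this.fderiv]
      simp [InnerProductSpace.toDual_apply_apply]
    rwa [h3] at h2
  have hcont : Continuous fun t : ℝ => ⟪gradient F (c t), v⟫ := by
    exact (Continuous.inner (hgrad_cont.comp (by continuity)) continuous_const)
  have hint : ∫ t in (0:ℝ)..1, ⟪gradient F (c t), v⟫ = F (c 1) - F (c 0) :=
    intervalIntegral.integral_eq_sub_of_hasDerivAt hderiv (hcont.intervalIntegrable 0 1)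
  have hbound : ∀ t ∈ Set.Icc (0:ℝ) 1,
      ⟪gradient F (c t), v⟫ ≤ ⟪gradient F u, v⟫ + β * t * ‖v‖ ^ 2 := by
    intro t ht
    have h1 : ⟪gradient F (c t) - gradient F u, v⟫ ≤ ‖gradient F (c t) - gradient F u‖ * ‖v‖ :=
      real_inner_le_norm _ _
    have h2 : ‖gradient F (c t) - gradient F u‖ ≤ β * (t * ‖v‖) := by
      have := hsmooth (c t) u
      simpa [hc, norm_smul, abs_of_nonneg ht.1] using this
    have h3 : ⟪gradient F (c t) - gradient F u, v⟫ ≤ β * t * ‖v‖ ^ 2 := by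
      calc ⟪gradient F (c t) - gradient F u, v⟫ ≤ ‖gradient F (c t) - gradient F u‖ * ‖v‖ := h1
        _ ≤ β * (t * ‖v‖) * ‖v‖ := by
            apply mul_le_mul_of_nonneg_right h2 (norm_nonneg _)
        _ = β * t * ‖v‖ ^ 2 := by ring
    have := inner_sub_left (𝕜 := ℝ) (gradient F (c t)) (gradient F u) v
    linarith [this ▸ h3]
  have hmono : ∫ t in (0:ℝ)..1, ⟪gradient F (c t), v⟫ ≤
      ∫ t in (0:ℝ)..1, (⟪gradient F u, v⟫ + β * t * ‖v‖ ^ 2) := by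
    apply intervalIntegral.integral_mono_on (by norm_num) (hcont.intervalIntegrable 0 1)
    · exact (continuous_const.add ((continuous_const.mul continuous_id).mul
        continuous_const)).intervalIntegrable 0 1
    · exact hbound
  have hval : ∫ t in (0:ℝ)..1, (⟪gradient F u, v⟫ + β * t * ‖v‖ ^ 2)
      = ⟪gradient F u, v⟫ + β / 2 * ‖v‖ ^ 2 := by
    have : ∀ t : ℝ, ⟪gradient F u, v⟫ + β * t * ‖v‖ ^ 2
        = ⟪gradient F u, v⟫ + (β * ‖v‖ ^ 2) * t := fun t => by ring
    simp only [this]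
    rw [intervalIntegral.integral_add (intervalIntegrable_const)
      ((by fun_prop : Continuous fun t : ℝ => β * ‖v‖ ^ 2 * t).intervalIntegrable 0 1),
      intervalIntegral.integral_const_mul, integral_id]
    simp
    ring
  have hc1 : c 1 = u + v := by simp [hc]
  have hc0 : c 0 = u := by simp [hc]
  rw [hc1, hc0] at hint
  linarith [hint ▸ (hmono.trans_eq hval)]

lemma aux_opnorm_of_quadform {d : ℕ}
    (T : EuclideanSpace ℝ (Fin d) →ₗ[ℝ] EuclideanSpace ℝ (Fin d))
    (β : ℝ) (hβ0 : 0 ≤ β)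
    (hsym : ∀ x y : EuclideanSpace ℝ (Fin d), ⟪T x, y⟫ = ⟪x, T y⟫)
    (h0 : ∀ x : EuclideanSpace ℝ (Fin d), 0 ≤ ⟪x, T x⟫)
    (hβ : ∀ x : EuclideanSpace ℝ (Fin d), ⟪x, T x⟫ ≤ β * ‖x‖ ^ 2)
    (x : EuclideanSpace ℝ (Fin d)) : ‖T x‖ ≤ β * ‖x‖ := by
  have key : ∀ y : EuclideanSpace ℝ (Fin d), ⟪T x, y⟫ ≤ β / 4 * (‖x‖ + ‖y‖) ^ 2 := by
    intro y
    have e1 : ⟪x + y, T (x + y)⟫ - ⟪x - y, T (x - y)⟫ = 4 * ⟪T x, y⟫ := by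
      have hc1 := hsym x y
      have hc2 := real_inner_comm (T x) y
      have hc3 := real_inner_comm (T y) x
      simp only [map_add, map_sub, inner_add_add_self, inner_sub_sub_self,
        inner_add_left, inner_add_right, inner_sub_left, inner_sub_right]
      linarith [real_inner_comm x (T y), real_inner_comm y (T x)]
    have e2 : 4 * ⟪T x, y⟫ ≤ β * ‖x + y‖ ^ 2 := by
      have := h0 (x - y)
      have := hβ (x + y)
      linarith [e1]
    have e3 : ‖x + y‖ ^ 2 ≤ (‖x‖ + ‖y‖) ^ 2 := by
      have h := norm_add_le x y
      nlinarith [norm_nonneg (x + y), norm_nonneg x, norm_nonneg y]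
    nlinarith
  by_cases hTx : T x = 0
  · simp [hTx]
    positivity
  · have hx : x ≠ 0 := by rintro rfl; simp at hTx
    have hnx : 0 < ‖x‖ := norm_pos_iff.mpr hx
    have hnTx : 0 < ‖T x‖ := norm_pos_iff.mpr hTx
    have := key ((‖x‖ / ‖T x‖) • T x)
    rw [real_inner_smul_right, real_inner_self_eq_norm_sq] at this
    rw [norm_smul] at this
    have habs : ‖(‖x‖ / ‖T x‖ : ℝ)‖ = ‖x‖ / ‖T x‖ := by
      rw [Real.norm_eq_abs, abs_of_nonneg (by positivity)]
    rw [habs] at this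
    have h1 : ‖x‖ / ‖T x‖ * ‖T x‖ ^ 2 = ‖x‖ * ‖T x‖ := by field_simp
    have h2 : ‖x‖ / ‖T x‖ * ‖T x‖ = ‖x‖ := by field_simp
    rw [h1, h2] at this
    have : ‖x‖ * ‖T x‖ ≤ β * ‖x‖ ^ 2 := by nlinarith
    nlinarith

lemma aux_posdef {d : ℕ} (α : ℝ) (hα : 0 < α) (H : Matrix (Fin d) (Fin d) ℝ)
    (hH : H.IsHermitian)
    (hb : ∀ x : EuclideanSpace ℝ (Fin d), α * ‖x‖ ^ 2 ≤ ⟪x, Matrix.toEuclideanLin H x⟫) :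
    H.PosDef := by
  refine Matrix.PosDef.of_dotProduct_mulVec_pos hH (fun x hx => ?_)
  set x' : EuclideanSpace ℝ (Fin d) := (WithLp.equiv 2 _).symm x with hx'
  have hxne : x' ≠ 0 := by
    simpa [hx'] using hx
  have hnorm : 0 < ‖x'‖ := norm_pos_iff.mpr hxne
  have h1 := hb x'
  have h2 : ⟪x', Matrix.toEuclideanLin H x'⟫ = dotProduct (star x) (H.mulVec x) := by
    rw [hx']
    simp [Matrix.toEuclideanLin_apply, PiLp.inner_apply, dotProduct, mul_comm]
  rw [h2] at h1
  calc (0:ℝ) < α * ‖x'‖ ^ 2 := by positivity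
    _ ≤ _ := h1

lemma aux_inv_apply {d : ℕ} (H : Matrix (Fin d) (Fin d) ℝ) (hH : IsUnit H.det)
    (g : EuclideanSpace ℝ (Fin d)) :
    Matrix.toEuclideanLin H (Matrix.toEuclideanLin H⁻¹ g) = g := by
  have h1 : H * H⁻¹ = 1 := Matrix.mul_nonsing_inv H hH
  have h2 : Matrix.toEuclideanLin (H * H⁻¹) g
      = Matrix.toEuclideanLin H (Matrix.toEuclideanLin H⁻¹ g) := by
    rw [Matrix.toEuclideanLin_eq_toLin,
      Matrix.toLin_mul (PiLp.basisFun 2 ℝ (Fin d)) (PiLp.basisFun 2 ℝ (Fin d))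
        (PiLp.basisFun 2 ℝ (Fin d))]
    rfl
  rw [← h2, h1]
  simp [Matrix.toEuclideanLin_apply]

lemma aux_arith (α β A q : ℝ) (hα : 0 < α) (hαβ : α ≤ β) (hA : 0 ≤ A) (hq : 0 ≤ q)
    (hAq : A ≤ β * q) : α ^ 3 / (2 * β ^ 4) * A ^ 2 ≤ α ^ 2 / (2 * β) * q ^ 2 := by
  have hβ : 0 < β := hα.trans_le hαβ
  rw [div_mul_eq_mul_div, div_mul_eq_mul_div,
    div_le_div_iff₀ (by positivity) (by positivity)]
  have hsq : A ^ 2 ≤ β ^ 2 * q ^ 2 := by nlinarith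
  nlinarith [mul_le_mul_of_nonneg_left hsq (show (0:ℝ) ≤ 2 * α ^ 3 * β by positivity),
    mul_le_mul_of_nonneg_right hαβ (show (0:ℝ) ≤ 2 * α ^ 2 * β ^ 3 * q ^ 2 by positivity)]

set_option maxHeartbeats 1000000 in
/-- (Theorem 4.1, Newton's method on AdaCore coresets, per-iteration form.)
Let `0 < α ≤ β`, `ε ≥ 0`. Let `L` (full loss) and `F` (weighted coreset loss) be twice
continuously differentiable with `F` `β`-smooth, and suppose at `w` the Hessians
`HL = ∇²L(w)` and `HF = ∇²F(w)` are symmetric with `αI ≼ HL, HF ≼ βI`. If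
`‖HL⁻¹∇L(w) − HF⁻¹∇F(w)‖ ≤ ε` and `‖∇L(w)‖ ≥ βε`, then the Newton step on the coreset
loss with learning rate `α/β`, `w' = w − (α/β) HF⁻¹ ∇F(w)`, satisfies
`F(w') − F(w) ≤ −(α³/(2β⁴)) (‖∇L(w)‖ − βε)²`. -/
theorem newton_descent_on_coreset {d : ℕ} (L F : EuclideanSpace ℝ (Fin d) → ℝ)
    (α β ε : ℝ) (hα : 0 < α) (hαβ : α ≤ β) (hε : 0 ≤ ε)
    (hL : ContDiff ℝ 2 L) (hF : ContDiff ℝ 2 F)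
    (hsmooth : ∀ u v : EuclideanSpace ℝ (Fin d),
      ‖gradient F u - gradient F v‖ ≤ β * ‖u - v‖)
    (w : EuclideanSpace ℝ (Fin d))
    (HL HF : Matrix (Fin d) (Fin d) ℝ) (hHL : HL.IsHermitian) (hHF : HF.IsHermitian)
    (hHLdef : ∀ v : EuclideanSpace ℝ (Fin d),
      Matrix.toEuclideanLin HL v = fderiv ℝ (gradient L) w v)
    (hHFdef : ∀ v : EuclideanSpace ℝ (Fin d),
      Matrix.toEuclideanLin HF v = fderiv ℝ (gradient F) w v)
    (hboundHL : ∀ x : EuclideanSpace ℝ (Fin d),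
      α * ‖x‖ ^ 2 ≤ ⟪x, Matrix.toEuclideanLin HL x⟫ ∧
      ⟪x, Matrix.toEuclideanLin HL x⟫ ≤ β * ‖x‖ ^ 2)
    (hboundHF : ∀ x : EuclideanSpace ℝ (Fin d),
      α * ‖x‖ ^ 2 ≤ ⟪x, Matrix.toEuclideanLin HF x⟫ ∧
      ⟪x, Matrix.toEuclideanLin HF x⟫ ≤ β * ‖x‖ ^ 2)
    (herr : ‖Matrix.toEuclideanLin HL⁻¹ (gradient L w) -
      Matrix.toEuclideanLin HF⁻¹ (gradient F w)‖ ≤ ε)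
    (hbig : β * ε ≤ ‖gradient L w‖)
    (w' : EuclideanSpace ℝ (Fin d))
    (hw' : w' = w - (α / β) • Matrix.toEuclideanLin HF⁻¹ (gradient F w)) :
    F w' - F w ≤ -(α ^ 3 / (2 * β ^ 4)) * (‖gradient L w‖ - β * ε) ^ 2 := by
  have hβ : 0 < β := hα.trans_le hαβ
  set g := gradient F w with hg
  set gL := gradient L w with hgL
  set p := Matrix.toEuclideanLin HF⁻¹ g with hp
  set pL := Matrix.toEuclideanLin HL⁻¹ gL with hpL
  -- invertibility
  have hFunit : IsUnit HF.det := (aux_posdef α hα HF hHF (fun x => (hboundHF x).1)).det_pos.ne'.isUnit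
  have hLunit : IsUnit HL.det := (aux_posdef α hα HL hHL (fun x => (hboundHL x).1)).det_pos.ne'.isUnit
  have hFp : Matrix.toEuclideanLin HF p = g := aux_inv_apply HF hFunit g
  have hLp : Matrix.toEuclideanLin HL pL = gL := aux_inv_apply HL hLunit gL
  -- symmetry
  have hsymF : ∀ x y : EuclideanSpace ℝ (Fin d),
      ⟪Matrix.toEuclideanLin HF x, y⟫ = ⟪x, Matrix.toEuclideanLin HF y⟫ := by
    have := Matrix.isHermitian_iff_isSymmetric.mp hHF
    exact fun x y => this x y
  have hsymL : ∀ x y : EuclideanSpace ℝ (Fin d),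
      ⟪Matrix.toEuclideanLin HL x, y⟫ = ⟪x, Matrix.toEuclideanLin HL y⟫ := by
    have := Matrix.isHermitian_iff_isSymmetric.mp hHL
    exact fun x y => this x y
  -- ‖gL‖ ≤ β ‖pL‖
  have hnormL : ‖gL‖ ≤ β * ‖pL‖ := by
    have := aux_opnorm_of_quadform (Matrix.toEuclideanLin HL) β hβ.le hsymL
      (fun x => le_trans (by positivity) ((hboundHL x).1)) (fun x => (hboundHL x).2) pL
    rwa [hLp] at this
  -- ‖p‖ lower bound
  have hpnorm : (‖gL‖ - β * ε) / β ≤ ‖p‖ := by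
    have h1 : ‖pL‖ - ‖p‖ ≤ ‖pL - p‖ := norm_sub_norm_le _ _
    have h2 : ‖pL - p‖ ≤ ε := herr
    have h3 : ‖gL‖ / β ≤ ‖pL‖ := by
      rw [div_le_iff₀ hβ]
      linarith [hnormL]
    have : ‖gL‖ / β - ε ≤ ‖p‖ := by linarith
    rw [sub_div]
    have : β * ε / β = ε := by field_simp
    linarith [this]
  have hA : 0 ≤ ‖gL‖ - β * ε := by linarith
  -- inner product lower bound
  have hgp : α * ‖p‖ ^ 2 ≤ ⟪g, p⟫ := by
    have h1 := (hboundHF p).1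
    have h2 : ⟪p, Matrix.toEuclideanLin HF p⟫ = ⟪g, p⟫ := by
      rw [hFp]; exact real_inner_comm g p
    rw [h2] at h1; exact h1
  -- descent lemma
  have hdesc : F w' ≤ F w + ⟪g, -(α / β) • p⟫ + β / 2 * ‖-(α / β) • p‖ ^ 2 := by
    have := aux_descent_lemma F β hF hsmooth w (-(α / β) • p)
    have hw'' : w' = w + -(α / β) • p := by
      rw [hw', sub_eq_add_neg, ← neg_smul]
    rwa [← hw''] at this
  have hinner : ⟪g, -(α / β) • p⟫ = -(α / β) * ⟪g, p⟫ := real_inner_smul_right _ _ _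
  have hnsq : ‖-(α / β) • p‖ ^ 2 = (α / β) ^ 2 * ‖p‖ ^ 2 := by
    have h : ‖-(α / β) • p‖ = α / β * ‖p‖ := by
      rw [norm_smul, Real.norm_eq_abs, abs_neg, abs_of_pos (div_pos hα hβ)]
    rw [h]; ring
  -- combine
  have hstep : F w' - F w ≤ -(α ^ 2 / (2 * β)) * ‖p‖ ^ 2 := by
    rw [hinner, hnsq] at hdesc
    have h4 : -(α / β) * ⟪g, p⟫ ≤ -(α / β) * (α * ‖p‖ ^ 2) := by
      apply mul_le_mul_of_nonpos_left hgp
      have : 0 < α / β := div_pos hα hβ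
      linarith
    have hfield : -(α / β) * (α * ‖p‖ ^ 2) + β / 2 * ((α / β) ^ 2 * ‖p‖ ^ 2)
        = -(α ^ 2 / (2 * β)) * ‖p‖ ^ 2 := by
      field_simp
      ring
    linarith
  -- final comparison
  have hAq : ‖gL‖ - β * ε ≤ β * ‖p‖ := by
    rw [div_le_iff₀ hβ] at hpnorm
    linarith [hpnorm]
  have hfin : α ^ 3 / (2 * β ^ 4) * (‖gL‖ - β * ε) ^ 2 ≤ α ^ 2 / (2 * β) * ‖p‖ ^ 2 :=
    aux_arith α β (‖gL‖ - β * ε) ‖p‖ hα hαβ hA (norm_nonneg _) hAq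
  linarith
end

section
/- (Corollary 4.2, AdaHessian with Hessian power k on AdaCore coresets, per-iteration form.) Let 0 < α ≤ β, ε ≥ 0, and k ∈ [0,1]. Let L : ℝ^d → ℝ (the full loss) and F : ℝ^d → ℝ (the weighted coreset loss) be twice continuously differentiable, with F β-smooth, and suppose at a point w ∈ ℝ^d the Hessians H_L = ∇²L(w) and H_F = ∇²F(w) are symmetric and satisfy αI ≼ H_L ≼ βI and αI ≼ H_F ≼ βI. Suppose ‖H_L⁻¹∇L(w) − H_F⁻¹∇F(w)‖ ≤ ε and ‖∇L(w)‖ ≥ βε. Then the update w' = w − (α^k/β) H_F^{−k} ∇F(w) satisfies F(w') − F(w) ≤ −(α^{k+2}/(2β^{k+3})) (‖∇L(w)‖ − βε)². -/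
open scoped RealInnerProductSpace
open Matrix

variable {d : ℕ} (H : Matrix (Fin d) (Fin d) ℝ) (hH : H.IsHermitian)

lemma star_eigU : star (hH.eigenvectorUnitary : Matrix (Fin d) (Fin d) ℝ)
    = (hH.eigenvectorUnitary : Matrix (Fin d) (Fin d) ℝ)ᵀ := by
  rw [star_eq_conjTranspose, conjTranspose_eq_transpose_of_trivial]

lemma eigU_orth : (hH.eigenvectorUnitary : Matrix (Fin d) (Fin d) ℝ)ᵀ *
    (hH.eigenvectorUnitary : Matrix (Fin d) (Fin d) ℝ) = 1 := by
  rw [← star_eigU]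
  exact Unitary.coe_star_mul_self hH.eigenvectorUnitary

lemma eigU_orth' : (hH.eigenvectorUnitary : Matrix (Fin d) (Fin d) ℝ) *
    (hH.eigenvectorUnitary : Matrix (Fin d) (Fin d) ℝ)ᵀ = 1 := by
  rw [← star_eigU]
  exact Unitary.coe_mul_star_self hH.eigenvectorUnitary

lemma spectral_real : H = (hH.eigenvectorUnitary : Matrix (Fin d) (Fin d) ℝ) *
    Matrix.diagonal hH.eigenvalues *
    (hH.eigenvectorUnitary : Matrix (Fin d) (Fin d) ℝ)ᵀ := by
  rw [← star_eigU]
  convert hH.spectral_theorem using 3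
  simp [Unitary.conjStarAlgAut_apply, Function.comp_def]

lemma euc_inner_eq (x y : EuclideanSpace ℝ (Fin d)) :
    ⟪x, y⟫ = (WithLp.equiv 2 (Fin d → ℝ) x) ⬝ᵥ (WithLp.equiv 2 (Fin d → ℝ) y) := by
  simp [PiLp.inner_apply, dotProduct, WithLp.equiv]
  exact Finset.sum_congr rfl fun i _ => mul_comm _ _

lemma euc_normsq_eq (x : EuclideanSpace ℝ (Fin d)) :
    ‖x‖ ^ 2 = (WithLp.equiv 2 (Fin d → ℝ) x) ⬝ᵥ (WithLp.equiv 2 (Fin d → ℝ) x) := by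
  rw [← real_inner_self_eq_norm_sq, euc_inner_eq]

lemma euc_lin_apply (M : Matrix (Fin d) (Fin d) ℝ) (x : EuclideanSpace ℝ (Fin d)) :
    (WithLp.equiv 2 (Fin d → ℝ)) (Matrix.toEuclideanLin M x)
      = M *ᵥ (WithLp.equiv 2 (Fin d → ℝ) x) := rfl

lemma orth_mulVec_dot' (U : Matrix (Fin d) (Fin d) ℝ) (hU : Uᵀ * U = 1)
    (z : Fin d → ℝ) : (U *ᵥ z) ⬝ᵥ (U *ᵥ z) = z ⬝ᵥ z := by
  rw [dotProduct_mulVec, vecMul_mulVec, hU, vecMul_one]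

lemma quad_conj (U : Matrix (Fin d) (Fin d) ℝ) (c : Fin d → ℝ) (x : Fin d → ℝ) :
    x ⬝ᵥ ((U * diagonal c * Uᵀ) *ᵥ x) = ∑ i, c i * ((Uᵀ *ᵥ x) i) ^ 2 := by
  rw [← mulVec_mulVec, ← mulVec_mulVec, dotProduct_mulVec, ← mulVec_transpose]
  simp only [dotProduct, mulVec_diagonal]
  exact Finset.sum_congr rfl fun i _ => by ring

lemma normsq_conj (U : Matrix (Fin d) (Fin d) ℝ) (hU : Uᵀ * U = 1)
    (c : Fin d → ℝ) (x : Fin d → ℝ) :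
    ((U * diagonal c * Uᵀ) *ᵥ x) ⬝ᵥ ((U * diagonal c * Uᵀ) *ᵥ x)
      = ∑ i, (c i) ^ 2 * ((Uᵀ *ᵥ x) i) ^ 2 := by
  rw [← mulVec_mulVec, ← mulVec_mulVec, orth_mulVec_dot' U hU]
  simp only [dotProduct, mulVec_diagonal]
  exact Finset.sum_congr rfl fun i _ => by ring

-- coordinates in eigenbasis
lemma coord_sumsq (x : EuclideanSpace ℝ (Fin d)) :
    ∑ i, (((hH.eigenvectorUnitary : Matrix (Fin d) (Fin d) ℝ)ᵀ *ᵥ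
      (WithLp.equiv 2 (Fin d → ℝ) x)) i) ^ 2 = ‖x‖ ^ 2 := by
  have := orth_mulVec_dot' (d := d) (hH.eigenvectorUnitary : Matrix (Fin d) (Fin d) ℝ)ᵀ
    (by rw [transpose_transpose]; exact eigU_orth' H hH) (WithLp.equiv 2 (Fin d → ℝ) x)
  rw [euc_normsq_eq, ← this]
  simp only [dotProduct]
  exact Finset.sum_congr rfl fun i _ => by ring

lemma quad_specPow (x : EuclideanSpace ℝ (Fin d)) (s : ℝ) :
    ⟪x, Matrix.toEuclideanLin (specPow H hH s) x⟫
      = ∑ i, (hH.eigenvalues i ^ s) *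
        (((hH.eigenvectorUnitary : Matrix (Fin d) (Fin d) ℝ)ᵀ *ᵥ
          (WithLp.equiv 2 (Fin d → ℝ) x)) i) ^ 2 := by
  rw [euc_inner_eq, euc_lin_apply]
  rw [show specPow H hH s = (hH.eigenvectorUnitary : Matrix (Fin d) (Fin d) ℝ) *
    Matrix.diagonal (fun i => hH.eigenvalues i ^ s) *
    (hH.eigenvectorUnitary : Matrix (Fin d) (Fin d) ℝ)ᵀ by rw [specPow, star_eigU]]
  exact quad_conj _ _ _

lemma normsq_specPow (x : EuclideanSpace ℝ (Fin d)) (s : ℝ) :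
    ‖Matrix.toEuclideanLin (specPow H hH s) x‖ ^ 2
      = ∑ i, (hH.eigenvalues i ^ s) ^ 2 *
        (((hH.eigenvectorUnitary : Matrix (Fin d) (Fin d) ℝ)ᵀ *ᵥ
          (WithLp.equiv 2 (Fin d → ℝ) x)) i) ^ 2 := by
  rw [euc_normsq_eq, euc_lin_apply]
  rw [show specPow H hH s = (hH.eigenvectorUnitary : Matrix (Fin d) (Fin d) ℝ) *
    Matrix.diagonal (fun i => hH.eigenvalues i ^ s) *
    (hH.eigenvectorUnitary : Matrix (Fin d) (Fin d) ℝ)ᵀ by rw [specPow, star_eigU]]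
  exact normsq_conj _ (eigU_orth H hH) _ _

lemma normsq_self (x : EuclideanSpace ℝ (Fin d)) :
    ‖Matrix.toEuclideanLin H x‖ ^ 2
      = ∑ i, (hH.eigenvalues i) ^ 2 *
        (((hH.eigenvectorUnitary : Matrix (Fin d) (Fin d) ℝ)ᵀ *ᵥ
          (WithLp.equiv 2 (Fin d → ℝ) x)) i) ^ 2 := by
  rw [euc_normsq_eq, euc_lin_apply]
  conv_lhs => rw [spectral_real H hH]
  exact normsq_conj _ (eigU_orth H hH) _ _

lemma eig_mem (αa βa : ℝ)
    (hb : ∀ x : EuclideanSpace ℝ (Fin d),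
      αa * ‖x‖ ^ 2 ≤ ⟪x, Matrix.toEuclideanLin H x⟫ ∧
      ⟪x, Matrix.toEuclideanLin H x⟫ ≤ βa * ‖x‖ ^ 2) (i : Fin d) :
    αa ≤ hH.eigenvalues i ∧ hH.eigenvalues i ≤ βa := by
  have hb1 : ‖hH.eigenvectorBasis i‖ = 1 := hH.eigenvectorBasis.orthonormal.1 i
  have happ : Matrix.toEuclideanLin H (hH.eigenvectorBasis i)
      = hH.eigenvalues i • hH.eigenvectorBasis i := by
    apply (WithLp.equiv 2 (Fin d → ℝ)).injective
    rw [euc_lin_apply]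
    exact hH.mulVec_eigenvectorBasis i
  have := hb (hH.eigenvectorBasis i)
  rw [happ, real_inner_smul_right, real_inner_self_eq_norm_sq, hb1] at this
  simpa using this

lemma le_of_sq_le_sq'' {a b : ℝ} (ha : 0 ≤ a) (hb : 0 ≤ b) (h : a ^ 2 ≤ b ^ 2) :
    a ≤ b := by nlinarith

lemma norm_lin_bounds (αa βa : ℝ) (hαa : 0 < αa) (hβa : 0 ≤ βa)
    (heig : ∀ i, αa ≤ hH.eigenvalues i ∧ hH.eigenvalues i ≤ βa)
    (x : EuclideanSpace ℝ (Fin d)) :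
    ‖Matrix.toEuclideanLin H x‖ ≤ βa * ‖x‖ ∧
    αa * ‖x‖ ≤ ‖Matrix.toEuclideanLin H x‖ := by
  have hup : ‖Matrix.toEuclideanLin H x‖ ^ 2 ≤ (βa * ‖x‖) ^ 2 := by
    rw [normsq_self H hH, mul_pow, ← coord_sumsq H hH, Finset.mul_sum]
    refine Finset.sum_le_sum fun i _ => ?_
    have h := heig i
    refine mul_le_mul_of_nonneg_right ?_ (sq_nonneg _)
    nlinarith [mul_le_mul h.2 h.2 (le_trans hαa.le h.1) hβa]
  have hlo : (αa * ‖x‖) ^ 2 ≤ ‖Matrix.toEuclideanLin H x‖ ^ 2 := by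
    rw [normsq_self H hH, mul_pow, ← coord_sumsq H hH, Finset.mul_sum]
    refine Finset.sum_le_sum fun i _ => ?_
    have h := heig i
    refine mul_le_mul_of_nonneg_right ?_ (sq_nonneg _)
    nlinarith [mul_le_mul h.1 h.1 hαa.le (le_trans hαa.le h.1)]
  exact ⟨le_of_sq_le_sq'' (norm_nonneg _) (by positivity) hup,
    le_of_sq_le_sq'' (by positivity) (norm_nonneg _) hlo⟩

lemma descent_lemma {E : Type*} [NormedAddCommGroup E] [InnerProductSpace ℝ E] [CompleteSpace E]
    (f : E → ℝ) (β : ℝ) (hf : Differentiable ℝ f)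
    (hsmooth : ∀ u v : E, ‖gradient f u - gradient f v‖ ≤ β * ‖u - v‖)
    (x v : E) :
    f (x + v) ≤ f x + ⟪gradient f x, v⟫ + β / 2 * ‖v‖ ^ 2 := by
  have key : ∀ t : ℝ, HasDerivAt (fun t : ℝ => f (x + t • v))
      ⟪gradient f (x + t • v), v⟫ t := by
    intro t
    have hc : HasDerivAt (fun t : ℝ => x + t • v) v t := by
      simpa using (hasDerivAt_id t).smul_const v |>.const_add x
    have hg : HasGradientAt f (gradient f (x + t • v)) (x + t • v) :=
      (hf (x + t • v)).hasGradientAt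
    have := hg.hasFDerivAt.comp_hasDerivAt t hc
    simpa [InnerProductSpace.toDual_apply_apply, Function.comp_def] using this
  set g : ℝ → ℝ := fun t => f (x + t • v) - t * ⟪gradient f x, v⟫ - β / 2 * t ^ 2 * ‖v‖ ^ 2
    with hgdef
  have hg' : ∀ t : ℝ, HasDerivAt g
      (⟪gradient f (x + t • v) - gradient f x, v⟫ - β * t * ‖v‖ ^ 2) t := by
    intro t
    have h1 : HasDerivAt (fun t : ℝ => t * ⟪gradient f x, v⟫) ⟪gradient f x, v⟫ t := by
      simpa using (hasDerivAt_id t).mul_const _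
    have h2 : HasDerivAt (fun t : ℝ => β / 2 * t ^ 2 * ‖v‖ ^ 2) (β * t * ‖v‖ ^ 2) t := by
      have h := ((hasDerivAt_pow 2 t).const_mul (β / 2)).mul_const (‖v‖ ^ 2)
      exact h.congr_deriv (by push_cast; ring)
    have := ((key t).sub h1).sub h2
    simpa [inner_sub_left, Pi.sub_def, hgdef] using this
  have hmono : AntitoneOn g (Set.Icc 0 1) := by
    apply antitoneOn_of_deriv_nonpos (convex_Icc 0 1)
    · have : Continuous g := by
        apply Continuous.sub
        apply Continuous.sub
        · exact hf.continuous.comp (by fun_prop)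
        · fun_prop
        · fun_prop
      exact this.continuousOn
    · intro t ht
      exact ((hg' t).differentiableAt).differentiableWithinAt
    · intro t ht
      rw [interior_Icc] at ht
      rw [(hg' t).deriv]
      have h1 : ⟪gradient f (x + t • v) - gradient f x, v⟫ ≤ β * t * ‖v‖ ^ 2 := by
        calc ⟪gradient f (x + t • v) - gradient f x, v⟫
            ≤ ‖gradient f (x + t • v) - gradient f x‖ * ‖v‖ := real_inner_le_norm _ _
          _ ≤ (β * ‖(x + t • v) - x‖) * ‖v‖ := by
              gcongr; exact hsmooth _ _
          _ = β * t * ‖v‖ ^ 2 := by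
              simp only [add_sub_cancel_left, norm_smul, Real.norm_eq_abs,
                abs_of_pos ht.1]
              ring
      linarith
  have := hmono (Set.left_mem_Icc.2 zero_le_one) (Set.right_mem_Icc.2 zero_le_one) zero_le_one
  simp only [hgdef] at this
  simp only [zero_smul, add_zero, one_smul, zero_mul, mul_zero] at this
  nlinarith [this]


set_option maxHeartbeats 1000000 in
/-- (Corollary 4.2, AdaHessian with Hessian power `k` on AdaCore coresets.)
Let `0 < α ≤ β`, `ε ≥ 0`, `k ∈ [0,1]`. Let `L` (full loss) and `F` (coreset loss) be
twice continuously differentiable with `F` `β`-smooth, and at `w` let the Hessians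
`HL = ∇²L(w)`, `HF = ∇²F(w)` be symmetric with `αI ≼ HL, HF ≼ βI`. If
`‖HL⁻¹∇L(w) − HF⁻¹∇F(w)‖ ≤ ε` and `‖∇L(w)‖ ≥ βε`, then the update
`w' = w − (α^k/β) HF^{−k} ∇F(w)` satisfies
`F(w') − F(w) ≤ −(α^{k+2}/(2β^{k+3})) (‖∇L(w)‖ − βε)²`. -/
theorem adahessian_descent_on_coreset {d : ℕ} (L F : EuclideanSpace ℝ (Fin d) → ℝ)
    (α β ε k : ℝ) (hα : 0 < α) (hαβ : α ≤ β) (hε : 0 ≤ ε) (hk0 : 0 ≤ k) (hk1 : k ≤ 1)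
    (hL : ContDiff ℝ 2 L) (hF : ContDiff ℝ 2 F)
    (hsmooth : ∀ u v : EuclideanSpace ℝ (Fin d),
      ‖gradient F u - gradient F v‖ ≤ β * ‖u - v‖)
    (w : EuclideanSpace ℝ (Fin d))
    (HL HF : Matrix (Fin d) (Fin d) ℝ) (hHL : HL.IsHermitian) (hHF : HF.IsHermitian)
    (hHLdef : ∀ v : EuclideanSpace ℝ (Fin d),
      Matrix.toEuclideanLin HL v = fderiv ℝ (gradient L) w v)
    (hHFdef : ∀ v : EuclideanSpace ℝ (Fin d),
      Matrix.toEuclideanLin HF v = fderiv ℝ (gradient F) w v)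
    (hboundHL : ∀ x : EuclideanSpace ℝ (Fin d),
      α * ‖x‖ ^ 2 ≤ ⟪x, Matrix.toEuclideanLin HL x⟫ ∧
      ⟪x, Matrix.toEuclideanLin HL x⟫ ≤ β * ‖x‖ ^ 2)
    (hboundHF : ∀ x : EuclideanSpace ℝ (Fin d),
      α * ‖x‖ ^ 2 ≤ ⟪x, Matrix.toEuclideanLin HF x⟫ ∧
      ⟪x, Matrix.toEuclideanLin HF x⟫ ≤ β * ‖x‖ ^ 2)
    (herr : ‖Matrix.toEuclideanLin HL⁻¹ (gradient L w) -
      Matrix.toEuclideanLin HF⁻¹ (gradient F w)‖ ≤ ε)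
    (hbig : β * ε ≤ ‖gradient L w‖)
    (w' : EuclideanSpace ℝ (Fin d))
    (hw' : w' = w -
      (α ^ k / β) • Matrix.toEuclideanLin (specPow HF hHF (-k)) (gradient F w)) :
    F w' - F w ≤ -(α ^ (k + 2) / (2 * β ^ (k + 3))) * (‖gradient L w‖ - β * ε) ^ 2 := by
  have hβ0 : 0 < β := lt_of_lt_of_le hα hαβ
  set g := gradient F w with hgdef
  set gL := gradient L w with hgLdef
  have heigF : ∀ i, α ≤ hHF.eigenvalues i ∧ hHF.eigenvalues i ≤ β :=
    fun i => eig_mem HF hHF α β hboundHF i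
  have heigL : ∀ i, α ≤ hHL.eigenvalues i ∧ hHL.eigenvalues i ≤ β :=
    fun i => eig_mem HL hHL α β hboundHL i
  have hA : 0 < α ^ k := Real.rpow_pos_of_pos hα k
  set η := α ^ k / β with hηdef
  have hη : 0 < η := div_pos hA hβ0
  set p := Matrix.toEuclideanLin (specPow HF hHF (-k)) g with hpdef
  -- Step 1: descent
  have hstep : F w' - F w ≤ -(η * ⟪g, p⟫) + β / 2 * (η ^ 2 * ‖p‖ ^ 2) := by
    have h := descent_lemma F β (hF.differentiable (by norm_num)) hsmooth w (-(η • p))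
    have e1 : w + -(η • p) = w' := by rw [hw', sub_eq_add_neg]
    have e2 : ⟪g, -(η • p)⟫ = -(η * ⟪g, p⟫) := by
      rw [inner_neg_right, real_inner_smul_right]
    have e3 : ‖-(η • p)‖ ^ 2 = η ^ 2 * ‖p‖ ^ 2 := by
      rw [norm_neg, norm_smul, Real.norm_eq_abs, abs_of_pos hη, mul_pow]
    rw [e1, e2, e3] at h
    linarith
  -- Step 2: spectral sums
  have hQ := quad_specPow HF hHF g (-k)
  have hN := normsq_specPow HF hHF g (-k)
  have hG := coord_sumsq HF hHF g
  set y : Fin d → ℝ := fun i => (((hHF.eigenvectorUnitary : Matrix (Fin d) (Fin d) ℝ)ᵀ *ᵥ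
    (WithLp.equiv 2 (Fin d → ℝ) g)) i) with hydef
  set μ : Fin d → ℝ := fun i => hHF.eigenvalues i ^ (-k : ℝ) with hμdef
  have hQ' : ⟪g, p⟫ = ∑ i, μ i * y i ^ 2 := hQ
  have hN' : ‖p‖ ^ 2 = ∑ i, (μ i) ^ 2 * y i ^ 2 := hN
  have hG' : ∑ i, y i ^ 2 = ‖g‖ ^ 2 := hG
  -- Step 3: per-eigenvalue inequality
  have hsum : -(η * ⟪g, p⟫) + β / 2 * (η ^ 2 * ‖p‖ ^ 2)
      ≤ -(η / 2 * β ^ (-k : ℝ) * ‖g‖ ^ 2) := by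
    rw [hQ', hN', ← hG']
    calc -(η * ∑ i, μ i * y i ^ 2) + β / 2 * (η ^ 2 * ∑ i, (μ i) ^ 2 * y i ^ 2)
        = ∑ i, (-(η * (μ i * y i ^ 2)) + β / 2 * (η ^ 2 * ((μ i) ^ 2 * y i ^ 2))) := by
          rw [Finset.mul_sum, Finset.mul_sum, Finset.mul_sum, ← Finset.sum_neg_distrib,
            ← Finset.sum_add_distrib]
      _ ≤ ∑ i, -(η / 2 * β ^ (-k : ℝ) * y i ^ 2) := by
          refine Finset.sum_le_sum fun i _ => ?_
          have hev := heigF i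
          have hevpos : 0 < hHF.eigenvalues i := lt_of_lt_of_le hα hev.1
          have hμl : β ^ (-k : ℝ) ≤ μ i :=
            Real.rpow_le_rpow_of_nonpos hevpos hev.2 (neg_nonpos.2 hk0)
          have hμu : μ i ≤ α ^ (-k : ℝ) :=
            Real.rpow_le_rpow_of_nonpos hα hev.1 (neg_nonpos.2 hk0)
          have hμpos : 0 < μ i := Real.rpow_pos_of_pos hevpos _
          have hone : α ^ k * α ^ (-k : ℝ) = 1 := by
            rw [← Real.rpow_add hα]; simp
          have hημ : η * μ i ≤ 1 / β := by
            calc η * μ i ≤ η * α ^ (-k : ℝ) := mul_le_mul_of_nonneg_left hμu hη.le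
              _ = 1 / β := by rw [hηdef, div_mul_eq_mul_div, hone]
          have hβημ : β * (η * μ i) ≤ 1 := by
            have := mul_le_mul_of_nonneg_left hημ hβ0.le
            rwa [mul_one_div, div_self hβ0.ne'] at this
          have hY : (0 : ℝ) ≤ y i ^ 2 := sq_nonneg _
          nlinarith [mul_le_mul_of_nonneg_right hβημ
              (mul_nonneg (mul_nonneg hη.le hμpos.le) hY),
            mul_le_mul_of_nonneg_right hμl
              (mul_nonneg (by positivity : (0:ℝ) ≤ η / 2) hY)]
      _ = -(η / 2 * β ^ (-k : ℝ) * ∑ i, y i ^ 2) := by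
          rw [Finset.sum_neg_distrib, ← Finset.mul_sum]
  -- Step 4: lower bound on ‖g‖
  have hdetL : IsUnit HL.det := by
    rw [hHL.det_eq_prod_eigenvalues]
    refine isUnit_iff_ne_zero.2 (ne_of_gt (Finset.prod_pos fun i _ => ?_))
    exact_mod_cast lt_of_lt_of_le hα (heigL i).1
  have hdetF : IsUnit HF.det := by
    rw [hHF.det_eq_prod_eigenvalues]
    refine isUnit_iff_ne_zero.2 (ne_of_gt (Finset.prod_pos fun i _ => ?_))
    exact_mod_cast lt_of_lt_of_le hα (heigF i).1
  set u := Matrix.toEuclideanLin HL⁻¹ gL with hudef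
  set v := Matrix.toEuclideanLin HF⁻¹ g with hvdef
  have huL : Matrix.toEuclideanLin HL u = gL := by
    apply (WithLp.equiv 2 (Fin d → ℝ)).injective
    rw [hudef, euc_lin_apply, euc_lin_apply, Matrix.mulVec_mulVec,
      Matrix.mul_nonsing_inv _ hdetL, Matrix.one_mulVec]
  have hvF : Matrix.toEuclideanLin HF v = g := by
    apply (WithLp.equiv 2 (Fin d → ℝ)).injective
    rw [hvdef, euc_lin_apply, euc_lin_apply, Matrix.mulVec_mulVec,
      Matrix.mul_nonsing_inv _ hdetF, Matrix.one_mulVec]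
  have hβu : ‖gL‖ ≤ β * ‖u‖ := by
    have := (norm_lin_bounds HL hHL α β hα (le_of_lt hβ0) heigL u).1
    rwa [huL] at this
  have hαv : α * ‖v‖ ≤ ‖g‖ := by
    have := (norm_lin_bounds HF hHF α β hα (le_of_lt hβ0) heigF v).2
    rwa [hvF] at this
  have hvu : ‖u‖ - ε ≤ ‖v‖ := by
    have h1 : ‖u‖ - ‖v‖ ≤ ‖u - v‖ := norm_sub_norm_le u v
    linarith [herr]
  have hS : 0 ≤ ‖gL‖ - β * ε := by linarith
  have hglow : α / β * (‖gL‖ - β * ε) ≤ ‖g‖ := by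
    have h1 : ‖gL‖ / β ≤ ‖u‖ := (div_le_iff₀' hβ0).2 hβu
    have h2 : α * (‖gL‖ / β - ε) ≤ α * (‖u‖ - ε) := by
      apply mul_le_mul_of_nonneg_left _ hα.le; linarith
    have h3 : α * (‖u‖ - ε) ≤ α * ‖v‖ := mul_le_mul_of_nonneg_left hvu hα.le
    calc α / β * (‖gL‖ - β * ε) = α * (‖gL‖ / β - ε) := by field_simp; try ring
      _ ≤ α * ‖v‖ := le_trans h2 h3
      _ ≤ ‖g‖ := hαv
  have hgsq : (α / β) ^ 2 * (‖gL‖ - β * ε) ^ 2 ≤ ‖g‖ ^ 2 := by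
    have h0 : 0 ≤ α / β * (‖gL‖ - β * ε) := mul_nonneg (by positivity) hS
    calc (α / β) ^ 2 * (‖gL‖ - β * ε) ^ 2 = (α / β * (‖gL‖ - β * ε)) ^ 2 := by ring
      _ ≤ ‖g‖ ^ 2 := pow_le_pow_left₀ h0 hglow 2
  -- Step 5: final arithmetic
  have hBk : (0 : ℝ) < β ^ k := Real.rpow_pos_of_pos hβ0 k
  have hinv : β ^ (-k : ℝ) = (β ^ k)⁻¹ := by
    rw [Real.rpow_neg hβ0.le]
  have e1 : α ^ (k + 2 : ℝ) = α ^ k * α ^ 2 := by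
    rw [Real.rpow_add hα, Real.rpow_two]
  have e2 : β ^ (k + 3 : ℝ) = β ^ k * β ^ 3 := by
    rw [Real.rpow_add hβ0]
    congr 1
    rw [show (3 : ℝ) = ((3 : ℕ) : ℝ) by norm_num, Real.rpow_natCast]
  have hfin : -(η / 2 * β ^ (-k : ℝ) * ‖g‖ ^ 2)
      ≤ -(α ^ (k + 2 : ℝ) / (2 * β ^ (k + 3 : ℝ))) * (‖gL‖ - β * ε) ^ 2 := by
    rw [e1, e2, hinv, hηdef, neg_mul, neg_le_neg_iff]
    have hstep2 : α ^ k / β / 2 * (β ^ k)⁻¹ * ((α / β) ^ 2 * (‖gL‖ - β * ε) ^ 2)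
        ≤ α ^ k / β / 2 * (β ^ k)⁻¹ * ‖g‖ ^ 2 :=
      mul_le_mul_of_nonneg_left hgsq (by positivity)
    refine le_trans (le_of_eq ?_) hstep2
    field_simp
  calc F w' - F w ≤ -(η * ⟪g, p⟫) + β / 2 * (η ^ 2 * ‖p‖ ^ 2) := hstep
    _ ≤ -(η / 2 * β ^ (-k : ℝ) * ‖g‖ ^ 2) := hsum
    _ ≤ _ := hfin
end

section
/- (Theorem 4.3, gradient descent on AdaCore coresets under PL*, per-iteration form.) Let L : ℝ^d → ℝ be differentiable and satisfy the μ-PL* condition with μ > 0. Let 0 < α ≤ β, let η > 0, ε ≥ 0, and ∇_max ≥ 0. Suppose at iteration t the update is w_{t+1} = w_t − η g^S for some vector g^S ∈ ℝ^d (the weighted coreset gradient) satisfying: (i) L(w_{t+1}) − L(w_t) ≤ −(η/2)‖g^S‖²; (ii) ‖g^S‖ ≥ (α/β)(‖∇L(w_t)‖ − βε); and (iii) βε ≤ ‖∇L(w_t)‖ ≤ ∇_max. Then L(w_{t+1}) ≤ (1 − ημα²/β²) L(w_t) − (ηα²/(2β²)) (β²ε² − 2βε∇_max). -/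
/-- (Theorem 4.3, gradient descent on AdaCore coresets under PL*, per-iteration form.)
Let `L` be differentiable and `μ`-PL*, `0 < α ≤ β`, `η > 0`, `ε ≥ 0`, `∇_max ≥ 0`.
If the update `w_{t+1} = w_t − η g^S` satisfies the descent inequality
`L(w_{t+1}) − L(w_t) ≤ −(η/2)‖g^S‖²`, the coreset gradient bound
`‖g^S‖ ≥ (α/β)(‖∇L(w_t)‖ − βε)`, and `βε ≤ ‖∇L(w_t)‖ ≤ ∇_max`, then
`L(w_{t+1}) ≤ (1 − ημα²/β²) L(w_t) − (ηα²/(2β²))(β²ε² − 2βε∇_max)`. -/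
theorem pl_descent_on_coreset {d : ℕ} (L : EuclideanSpace ℝ (Fin d) → ℝ)
    (hdiff : Differentiable ℝ L) (μ : ℝ) (hμ : 0 < μ)
    (hPL : ∀ w : EuclideanSpace ℝ (Fin d), μ * L w ≤ (1 / 2) * ‖gradient L w‖ ^ 2)
    (α β η ε gmax : ℝ) (hα : 0 < α) (hαβ : α ≤ β) (hη : 0 < η) (hε : 0 ≤ ε)
    (hgmax : 0 ≤ gmax)
    (wt wt1 gS : EuclideanSpace ℝ (Fin d)) (hupd : wt1 = wt - η • gS)
    (hdescent : L wt1 - L wt ≤ -(η / 2) * ‖gS‖ ^ 2)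
    (hlow : (α / β) * (‖gradient L wt‖ - β * ε) ≤ ‖gS‖)
    (hεg : β * ε ≤ ‖gradient L wt‖) (hup : ‖gradient L wt‖ ≤ gmax) :
    L wt1 ≤ (1 - η * μ * α ^ 2 / β ^ 2) * L wt -
      (η * α ^ 2 / (2 * β ^ 2)) * (β ^ 2 * ε ^ 2 - 2 * β * ε * gmax) := by
  have hβ : 0 < β := lt_of_lt_of_le hα hαβ
  set g := ‖gradient L wt‖ with hg
  set s := ‖gS‖ with hs
  have hPLt := hPL wt
  rw [← hg] at hPLt
  have h1 : 0 ≤ g - β * ε := sub_nonneg.2 hεg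
  have h3 : α * (g - β * ε) ≤ β * s := by
    calc α * (g - β * ε) = β * (α / β * (g - β * ε)) := by field_simp
    _ ≤ β * s := by exact mul_le_mul_of_nonneg_left hlow hβ.le
  have hq' : α ^ 2 * (g - β * ε) ^ 2 ≤ β ^ 2 * s ^ 2 := by
    have := pow_le_pow_left₀ (mul_nonneg hα.le h1) h3 2
    calc α ^ 2 * (g - β * ε) ^ 2 = (α * (g - β * ε)) ^ 2 := by ring
    _ ≤ (β * s) ^ 2 := this
    _ = β ^ 2 * s ^ 2 := by ring
  have hgbig : (g - β * ε) ^ 2 ≥ 2 * μ * L wt - 2 * β * ε * gmax + β ^ 2 * ε ^ 2 := by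
    nlinarith [hPLt, mul_le_mul_of_nonneg_left hup (by positivity : (0:ℝ) ≤ β * ε)]
  rw [← sub_nonneg]
  have hrw : (1 - η * μ * α ^ 2 / β ^ 2) * L wt -
      η * α ^ 2 / (2 * β ^ 2) * (β ^ 2 * ε ^ 2 - 2 * β * ε * gmax) - L wt1 =
      ((2 * β ^ 2 - 2 * η * μ * α ^ 2) * L wt -
        η * α ^ 2 * (β ^ 2 * ε ^ 2 - 2 * β * ε * gmax) - 2 * β ^ 2 * L wt1) /
        (2 * β ^ 2) := by
    field_simp
  rw [hrw]
  apply div_nonneg _ (by positivity)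
  nlinarith [mul_le_mul_of_nonneg_left hdescent (by positivity : (0:ℝ) ≤ 2 * β ^ 2),
    mul_le_mul_of_nonneg_left hq' hη.le,
    mul_le_mul_of_nonneg_left hgbig (by positivity : (0:ℝ) ≤ η * α ^ 2)]
end

section
/- (Gradient estimation error is bounded by the facility-location objective.) Let E be a real normed vector space, let V be a finite index set, let (v_i)_{i∈V} be vectors in E, and let S ⊆ V be nonempty. Then there exist nonnegative integer weights (γ_j)_{j∈S} with Σ_{j∈S} γ_j = |V| such that ‖Σ_{i∈V} v_i − Σ_{j∈S} γ_j v_j‖ ≤ Σ_{i∈V} min_{j∈S} ‖v_i − v_j‖. (Namely, γ_j is the number of i ∈ V whose nearest element of S is j, under a fixed choice of nearest element.) -/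
open Finset in
/-- (Gradient estimation error is bounded by the facility-location objective.)
Let `(v_i)_{i ∈ V}` be vectors in a real normed space indexed by a finite set `V`, and
let `S ⊆ V` be nonempty. Then there are nonnegative integer weights `(γ_j)_{j ∈ S}` with
`Σ_{j∈S} γ_j = |V|` such that
`‖Σ_{i∈V} v_i − Σ_{j∈S} γ_j v_j‖ ≤ Σ_{i∈V} min_{j∈S} ‖v_i − v_j‖`. -/
theorem coreset_error_le_facility_location {ι : Type*} [DecidableEq ι]
    {E : Type*} [NormedAddCommGroup E] [NormedSpace ℝ E]
    (V : Finset ι) (v : ι → E) (S : Finset ι) (hSV : S ⊆ V) (hS : S.Nonempty) :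
    ∃ γ : ι → ℕ, (∑ j ∈ S, γ j = V.card) ∧
      ‖(∑ i ∈ V, v i) - ∑ j ∈ S, (γ j : ℝ) • v j‖ ≤
        ∑ i ∈ V, S.inf' hS (fun j => ‖v i - v j‖) := by
  -- choose a nearest element of S for each i
  have hchoice : ∀ i : ι, ∃ j ∈ S, S.inf' hS (fun j => ‖v i - v j‖) = ‖v i - v j‖ :=
    fun i => S.exists_mem_eq_inf' hS _
  choose f hfS hf using hchoice
  refine ⟨fun j => (V.filter (fun i => f i = j)).card, ?_, ?_⟩
  · rw [← Finset.card_biUnion]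
    · congr 1
      apply Finset.Subset.antisymm
      · intro x hx
        simp only [Finset.mem_biUnion, Finset.mem_filter] at hx
        exact hx.choose_spec.2.1
      · intro x hx
        simp only [Finset.mem_biUnion, Finset.mem_filter]
        exact ⟨f x, hfS x, hx, rfl⟩
    · intro a _ b _ hab
      simp only [Finset.disjoint_left, Finset.mem_filter]
      rintro x ⟨_, rfl⟩ ⟨_, h⟩
      exact hab h
  · have key : ∑ j ∈ S, ((V.filter (fun i => f i = j)).card : ℝ) • v j
        = ∑ i ∈ V, v (f i) := by
      rw [eq_comm, ← Finset.sum_fiberwise_of_maps_to (fun i _ => hfS i)]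
      refine Finset.sum_congr rfl fun j hj => ?_
      rw [Finset.sum_congr rfl (fun i hi => show v (f i) = v j by
        simp only [Finset.mem_filter] at hi; rw [hi.2]),
        Finset.sum_const, ← Nat.cast_smul_eq_nsmul ℝ]
    rw [key, ← Finset.sum_sub_distrib]
    calc ‖∑ i ∈ V, (v i - v (f i))‖ ≤ ∑ i ∈ V, ‖v i - v (f i)‖ := norm_sum_le _ _
      _ = ∑ i ∈ V, S.inf' hS (fun j => ‖v i - v j‖) := by
        exact Finset.sum_congr rfl fun i _ => (hf i).symm
end

section
/- (Preconditioned gradient difference bound for ridge regression.) Let x_i, x_j, w ∈ ℝ^d, y_i, y_j ∈ ℝ, λ ≥ 0, and let A, B be real d×d matrices. For the ridge regression losses f_i(w) = (1/2)(⟨x_i, w⟩ − y_i)² + (λ/2)‖w‖², whose gradients are ∇f_i(w) = x_i(⟨x_i, w⟩ − y_i) + λw, the following identity and inequality hold: A∇f_i(w) − B∇f_j(w) = (⟨x_i,w⟩ − y_i)(Ax_i − Bx_j) + (⟨x_i − x_j, w⟩ + y_j − y_i) Bx_j + λ(A − B)w, and therefore ‖A∇f_i(w) − B∇f_j(w)‖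 ≤ |⟨x_i,w⟩ − y_i| (‖A − B‖‖x_i‖ + ‖B‖‖x_i − x_j‖) + |⟨x_i − x_j, w⟩ + y_j − y_i| ‖Bx_j‖ + λ‖(A − B)w‖. -/
open scoped RealInnerProductSpace

/-- The operator norm of a real matrix, induced by the Euclidean norm. -/
noncomputable def opNorm {m n : ℕ} (M : Matrix (Fin m) (Fin n) ℝ) : ℝ :=
  ‖LinearMap.toContinuousLinearMap (Matrix.toEuclideanLin M)‖

lemma opNorm_bound {m n : ℕ} (M : Matrix (Fin m) (Fin n) ℝ)
    (v : EuclideanSpace ℝ (Fin n)) :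
    ‖Matrix.toEuclideanLin M v‖ ≤ opNorm M * ‖v‖ := by
  exact (LinearMap.toContinuousLinearMap (Matrix.toEuclideanLin M)).le_opNorm v

/-- (Preconditioned gradient difference bound for ridge regression.)
For ridge losses `f_i(w) = (1/2)(⟨x_i,w⟩ − y_i)² + (λ/2)‖w‖²` with gradients
`∇f_i(w) = (⟨x_i,w⟩ − y_i) x_i + λw`, and matrices `A`, `B`:
`A∇f_i(w) − B∇f_j(w) = (⟨x_i,w⟩ − y_i)(Ax_i − Bx_j)
  + (⟨x_i − x_j, w⟩ + y_j − y_i) Bx_j + λ(A − B)w`, and hence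
`‖A∇f_i(w) − B∇f_j(w)‖ ≤ |⟨x_i,w⟩ − y_i| (‖A − B‖‖x_i‖ + ‖B‖‖x_i − x_j‖)
  + |⟨x_i − x_j, w⟩ + y_j − y_i| ‖Bx_j‖ + λ‖(A − B)w‖`. -/
theorem ridge_preconditioned_grad_diff_bound {d : ℕ}
    (xi xj w : EuclideanSpace ℝ (Fin d)) (yi yj lam : ℝ) (hlam : 0 ≤ lam)
    (A B : Matrix (Fin d) (Fin d) ℝ)
    (gi gj : EuclideanSpace ℝ (Fin d))
    (hgi : gi = (⟪xi, w⟫ - yi) • xi + lam • w)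
    (hgj : gj = (⟪xj, w⟫ - yj) • xj + lam • w) :
    Matrix.toEuclideanLin A gi - Matrix.toEuclideanLin B gj =
      (⟪xi, w⟫ - yi) • (Matrix.toEuclideanLin A xi - Matrix.toEuclideanLin B xj) +
      (⟪xi - xj, w⟫ + yj - yi) • Matrix.toEuclideanLin B xj +
      lam • Matrix.toEuclideanLin (A - B) w ∧
    ‖Matrix.toEuclideanLin A gi - Matrix.toEuclideanLin B gj‖ ≤
      |⟪xi, w⟫ - yi| * (opNorm (A - B) * ‖xi‖ + opNorm B * ‖xi - xj‖) +
      |⟪xi - xj, w⟫ + yj - yi| * ‖Matrix.toEuclideanLin B xj‖ +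
      lam * ‖Matrix.toEuclideanLin (A - B) w‖ := by
  have hc : ⟪xi - xj, w⟫ + yj - yi = (⟪xi, w⟫ - yi) - (⟪xj, w⟫ - yj) := by
    rw [inner_sub_left]; ring
  have hid : Matrix.toEuclideanLin A gi - Matrix.toEuclideanLin B gj =
      (⟪xi, w⟫ - yi) • (Matrix.toEuclideanLin A xi - Matrix.toEuclideanLin B xj) +
      (⟪xi - xj, w⟫ + yj - yi) • Matrix.toEuclideanLin B xj +
      lam • Matrix.toEuclideanLin (A - B) w := by
    subst hgi hgj
    have hsub : Matrix.toEuclideanLin (A - B) =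
        Matrix.toEuclideanLin A - Matrix.toEuclideanLin B := map_sub _ _ _
    rw [hc, hsub]
    simp only [map_add, map_smul, LinearMap.sub_apply]
    module
  refine ⟨hid, ?_⟩
  rw [hid]
  have h1 : ‖(⟪xi, w⟫ - yi) • (Matrix.toEuclideanLin A xi - Matrix.toEuclideanLin B xj)‖ ≤
      |⟪xi, w⟫ - yi| * (opNorm (A - B) * ‖xi‖ + opNorm B * ‖xi - xj‖) := by
    rw [norm_smul, Real.norm_eq_abs]
    apply mul_le_mul_of_nonneg_left _ (abs_nonneg _)
    have he : Matrix.toEuclideanLin A xi - Matrix.toEuclideanLin B xj =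
        Matrix.toEuclideanLin (A - B) xi + Matrix.toEuclideanLin B (xi - xj) := by
      have hsub : Matrix.toEuclideanLin (A - B) =
          Matrix.toEuclideanLin A - Matrix.toEuclideanLin B := map_sub _ _ _
      rw [hsub]
      simp only [map_sub, LinearMap.sub_apply]
      module
    rw [he]
    exact (norm_add_le _ _).trans (add_le_add (opNorm_bound _ _) (opNorm_bound _ _))
  calc ‖(⟪xi, w⟫ - yi) • (Matrix.toEuclideanLin A xi - Matrix.toEuclideanLin B xj) +
      (⟪xi - xj, w⟫ + yj - yi) • Matrix.toEuclideanLin B xj +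
      lam • Matrix.toEuclideanLin (A - B) w‖ ≤
      ‖(⟪xi, w⟫ - yi) • (Matrix.toEuclideanLin A xi - Matrix.toEuclideanLin B xj)‖ +
      ‖(⟪xi - xj, w⟫ + yj - yi) • Matrix.toEuclideanLin B xj‖ +
      ‖lam • Matrix.toEuclideanLin (A - B) w‖ :=
        (norm_add_le _ _).trans (by gcongr; exact norm_add_le _ _)
    _ ≤ _ := by
        refine add_le_add (add_le_add h1 ?_) ?_
        · rw [norm_smul, Real.norm_eq_abs]
        · rw [norm_smul, Real.norm_eq_abs, abs_of_nonneg hlam]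
end
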